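/- Let s > 1 and 0 < β₁ ≤ β₂ < ∞. There exists a constant c = c(s,β₁,β₂) > 0 such that for every bounded measurable set Ω ⊂ ℝⁿ with positive Lebesgue measure, every β ∈ [β₁,β₂], and every f ∈ L^s(Ω) which is not almost everywhere zero, one has ⨍_Ω |f| [log(e + |f| / ⨍_Ω |f| dx)]^β dx ≤ c (⨍_Ω |f|^s dx)^{1/s}. -/

import Mathlib

open MeasureTheory Real

/-- uniform `L log^β L` bound by the `L^s` average, for β in a compact range. -/
theorem stmt_8 (s β₁ β₂ : ℝ) (hs : 1 < s) (hβ₁ : 0 < β₁) (hβ₁₂ : β₁ ≤ β₂) :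
    ∃ c : ℝ, 0 < c ∧ ∀ (n : ℕ) (Ω : Set (EuclideanSpace ℝ (Fin n))),
      MeasurableSet Ω → Bornology.IsBounded Ω → 0 < volume Ω →
      ∀ β : ℝ, β₁ ≤ β → β ≤ β₂ →
      ∀ f : EuclideanSpace ℝ (Fin n) → ℝ,
        MemLp f (ENNReal.ofReal s) (volume.restrict Ω) →
        ¬ (f =ᵐ[volume.restrict Ω] 0) →
        ⨍ x in Ω, |f x| * (Real.log (Real.exp 1 + |f x| / ⨍ y in Ω, |f y|)) ^ β ≤
          c * (⨍ x in Ω, |f x| ^ s) ^ (1 / s) := by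
  have hspos : (0:ℝ) < s := lt_trans one_pos hs
  have hq : s.HolderConjugate s.conjExponent := Real.HolderConjugate.conjExponent hs
  set q := s.conjExponent with hqdef
  have hqpos : 0 < q := hq.symm.pos
  have hqval : q = s / (s - 1) := hq.conjugate_eq
  have hβ₂pos : 0 < β₂ := lt_of_lt_of_le hβ₁ hβ₁₂
  set γ := β₂ * q with hγdef
  have hγpos : 0 < γ := mul_pos hβ₂pos hqpos
  refine ⟨1/s + γ ^ γ * (Real.exp 1 + 1) / q, by positivity, ?_⟩
  intro n Ω hΩm hΩb hΩpos β hββ₁ hββ₂ f hf hf0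
  set μ := (volume : Measure (EuclideanSpace ℝ (Fin n))).restrict Ω with hμdef
  haveI : IsFiniteMeasure μ := ⟨by rw [hμdef, Measure.restrict_apply_univ]; exact hΩb.measure_lt_top⟩
  have hμuniv : μ Set.univ = volume Ω := by rw [hμdef, Measure.restrict_apply_univ]
  set m := (μ Set.univ).toReal with hmdef
  have hm : 0 < m := by
    rw [hmdef, hμuniv]
    exact ENNReal.toReal_pos hΩpos.ne' hΩb.measure_lt_top.ne
  -- integrability
  have hs1 : (1 : ENNReal) ≤ ENNReal.ofReal s := ENNReal.one_le_ofReal.mpr hs.le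
  have hfi : Integrable f μ := hf.integrable hs1
  have habs : Integrable (fun x => |f x|) μ := hfi.abs
  have hfs : Integrable (fun x => |f x| ^ s) μ := by
    have := hf.integrable_norm_rpow (by simp [hspos]) ENNReal.ofReal_ne_top
    simpa [Real.norm_eq_abs, ENNReal.toReal_ofReal hspos.le] using this
  -- positivity of the averages
  set A := ⨍ y, |f y| ∂μ with hAdef
  have hAint : (0:ℝ) < ∫ x, |f x| ∂μ := by
    refine lt_of_le_of_ne (integral_nonneg fun x => abs_nonneg _) (Ne.symm ?_)
    intro h
    apply hf0
    have h2 := (integral_eq_zero_iff_of_nonneg (fun x => abs_nonneg (f x)) habs).mp h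
    filter_upwards [h2] with x hx
    simpa using hx
  have hAeq : A = m⁻¹ * ∫ x, |f x| ∂μ := by
    rw [hAdef, average_eq]; rfl
  have hA : 0 < A := by rw [hAeq]; positivity
  have hBsint : (0:ℝ) < ∫ x, |f x| ^ s ∂μ := by
    refine lt_of_le_of_ne (integral_nonneg fun x => by positivity) (Ne.symm ?_)
    intro h
    apply hf0
    have h2 := (integral_eq_zero_iff_of_nonneg (fun x => by positivity) hfs).mp h
    filter_upwards [h2] with x hx
    have hx' : |f x| ^ s = 0 := hx
    have : |f x| = 0 := (Real.rpow_eq_zero (abs_nonneg _) hspos.ne').mp hx'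
    simpa using this
  have hBseq : (⨍ x, |f x| ^ s ∂μ) = m⁻¹ * ∫ x, |f x| ^ s ∂μ := by
    rw [average_eq]; rfl
  have hBs : 0 < ⨍ x, |f x| ^ s ∂μ := by rw [hBseq]; positivity
  set B := (⨍ x, |f x| ^ s ∂μ) ^ (1/s) with hBdef
  have hB : 0 < B := Real.rpow_pos_of_pos hBs _
  have hBpow : B ^ s = ⨍ x, |f x| ^ s ∂μ := by
    rw [hBdef, ← Real.rpow_mul hBs.le, one_div_mul_cancel hspos.ne', Real.rpow_one]
  set l := B ^ ((1-s)/s) with hldef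
  have hl : 0 < l := Real.rpow_pos_of_pos hB _
  -- pointwise bound
  have hpt : ∀ x, |f x| * (Real.log (Real.exp 1 + |f x| / A)) ^ β ≤
      (l ^ s / s) * |f x| ^ s + (γ ^ γ / (l ^ q * q)) * (Real.exp 1 + |f x| / A) := by
    intro x
    set t := |f x| with htdef
    have ht : 0 ≤ t := abs_nonneg _
    have hu : 0 ≤ t / A := div_nonneg ht hA.le
    set v := Real.exp 1 + t / A with hvdef
    have hv : 0 < v := by positivity
    set L := Real.log v with hLdef
    have hL1 : 1 ≤ L := by
      rw [hLdef, ← Real.log_exp 1]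
      exact Real.log_le_log (Real.exp_pos 1) (by rw [hvdef]; linarith)
    have hL0 : (0:ℝ) ≤ L := le_trans zero_le_one hL1
    have hLβ : 0 ≤ L ^ β := Real.rpow_nonneg hL0 _
    have young := Real.young_inequality_of_nonneg
      (mul_nonneg hl.le ht) (div_nonneg hLβ hl.le) hq
    have hab : (l * t) * (L ^ β / l) = t * L ^ β := by
      field_simp
    have h1 : (l * t) ^ s = l ^ s * t ^ s := Real.mul_rpow hl.le ht
    have h2 : (L ^ β / l) ^ q = L ^ (β * q) / l ^ q := by
      rw [Real.div_rpow hLβ hl.le, ← Real.rpow_mul hL0]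
    have h3 : L ^ (β * q) ≤ L ^ γ :=
      Real.rpow_le_rpow_of_exponent_le hL1 (by
        rw [hγdef]; exact mul_le_mul_of_nonneg_right hββ₂ hqpos.le)
    have h4 : L ^ γ ≤ γ ^ γ * v := by
      have hlog : L ≤ γ * v ^ (1/γ) := by
        have h5 := Real.log_le_rpow_div hv.le (by positivity : (0:ℝ) < 1/γ)
        calc L ≤ v ^ (1/γ) / (1/γ) := h5
          _ = γ * v ^ (1/γ) := by field_simp; try ring
      calc L ^ γ ≤ (γ * v ^ (1/γ)) ^ γ :=
            Real.rpow_le_rpow hL0 hlog hγpos.le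
        _ = γ ^ γ * (v ^ (1/γ)) ^ γ := Real.mul_rpow hγpos.le (Real.rpow_nonneg hv.le _)
        _ = γ ^ γ * v := by
            rw [← Real.rpow_mul hv.le, one_div_mul_cancel hγpos.ne', Real.rpow_one]
    have hlq0 : 0 < l ^ q := Real.rpow_pos_of_pos hl _
    calc t * L ^ β = (l * t) * (L ^ β / l) := hab.symm
      _ ≤ (l * t) ^ s / s + (L ^ β / l) ^ q / q := young
      _ = (l ^ s / s) * t ^ s + L ^ (β * q) / l ^ q / q := by rw [h1, h2]; ring
      _ ≤ (l ^ s / s) * t ^ s + L ^ γ / l ^ q / q := by gcongr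
      _ ≤ (l ^ s / s) * t ^ s + γ ^ γ * v / l ^ q / q := by gcongr
      _ = (l ^ s / s) * t ^ s + (γ ^ γ / (l ^ q * q)) * v := by
          field_simp
          try ring
  -- integrate the pointwise bound
  have hgnn : ∀ x, 0 ≤ |f x| * (Real.log (Real.exp 1 + |f x| / A)) ^ β := by
    intro x
    have h0 : (1:ℝ) ≤ Real.exp 1 + |f x| / A := by
      have h1 : (1:ℝ) ≤ Real.exp 1 := by
        have := Real.add_one_le_exp (1:ℝ)
        linarith
      have h2 : (0:ℝ) ≤ |f x| / A := div_nonneg (abs_nonneg _) hA.le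
      linarith
    have h3 : (0:ℝ) ≤ Real.log (Real.exp 1 + |f x| / A) := Real.log_nonneg h0
    have h4 : (0:ℝ) ≤ (Real.log (Real.exp 1 + |f x| / A)) ^ β := Real.rpow_nonneg h3 _
    exact mul_nonneg (abs_nonneg _) h4
  have hint2 : Integrable (fun x => Real.exp 1 + |f x| / A) μ :=
    (integrable_const _).add (habs.div_const A)
  have hhint : Integrable (fun x => (l ^ s / s) * |f x| ^ s +
      (γ ^ γ / (l ^ q * q)) * (Real.exp 1 + |f x| / A)) μ :=
    (hfs.const_mul _).add (hint2.const_mul _)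
  have hmono : ∫ x, |f x| * (Real.log (Real.exp 1 + |f x| / A)) ^ β ∂μ ≤
      ∫ x, ((l ^ s / s) * |f x| ^ s + (γ ^ γ / (l ^ q * q)) * (Real.exp 1 + |f x| / A)) ∂μ :=
    integral_mono_of_nonneg (Filter.Eventually.of_forall hgnn) hhint
      (Filter.Eventually.of_forall hpt)
  have hRHSint : ∫ x, ((l ^ s / s) * |f x| ^ s +
      (γ ^ γ / (l ^ q * q)) * (Real.exp 1 + |f x| / A)) ∂μ
      = (l ^ s / s) * (m * B ^ s) + (γ ^ γ / (l ^ q * q)) * ((Real.exp 1 + 1) * m) := by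
    rw [integral_add (hfs.const_mul _) (hint2.const_mul _),
      integral_const_mul, integral_const_mul,
      integral_add (integrable_const _) (habs.div_const A)]
    have e1 : ∫ x, |f x| ^ s ∂μ = m * B ^ s := by
      rw [hBpow, hBseq]; field_simp
    have e2 : ∫ x, |f x| / A ∂μ = m := by
      rw [integral_div]
      have e3 : ∫ x, |f x| ∂μ = m * A := by rw [hAeq]; field_simp
      rw [e3]
      field_simp
    rw [e1, e2, integral_const]
    simp only [smul_eq_mul, measureReal_def, ← hmdef]
    ring
  -- algebraic identities for the chosen λ = l
  have hls : l ^ s * B ^ s = B := by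
    rw [hldef, ← Real.rpow_mul hB.le, div_mul_cancel₀ _ hspos.ne',
      ← Real.rpow_add hB]
    norm_num
  have hlq : l ^ q = B⁻¹ := by
    rw [hldef, ← Real.rpow_mul hB.le]
    have he : (1 - s)/s * q = -1 := by
      rw [hqval]
      have hss : s - 1 ≠ 0 := sub_ne_zero.mpr hs.ne'
      field_simp
      try ring
    rw [he, Real.rpow_neg_one]
  -- put everything together
  have havg : (⨍ x, |f x| * (Real.log (Real.exp 1 + |f x| / A)) ^ β ∂μ)
      = m⁻¹ * ∫ x, |f x| * (Real.log (Real.exp 1 + |f x| / A)) ^ β ∂μ := by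
    rw [average_eq]; rfl
  have hfinal : (l ^ s / s) * (m * B ^ s) + (γ ^ γ / (l ^ q * q)) * ((Real.exp 1 + 1) * m)
      = m * ((1/s + γ ^ γ * (Real.exp 1 + 1) / q) * B) := by
    rw [hlq]
    have h6 : (l ^ s / s) * (m * B ^ s) = m * (B / s) := by
      rw [div_mul_eq_mul_div, show l ^ s * (m * B ^ s) = m * (l ^ s * B ^ s) by ring, hls]
      ring
    rw [h6]
    field_simp
  rw [havg]
  calc m⁻¹ * ∫ x, |f x| * (Real.log (Real.exp 1 + |f x| / A)) ^ β ∂μ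
      ≤ m⁻¹ * ∫ x, ((l ^ s / s) * |f x| ^ s +
          (γ ^ γ / (l ^ q * q)) * (Real.exp 1 + |f x| / A)) ∂μ :=
        mul_le_mul_of_nonneg_left hmono (inv_nonneg.mpr hm.le)
    _ = m⁻¹ * (m * ((1/s + γ ^ γ * (Real.exp 1 + 1) / q) * B)) := by rw [hRHSint, hfinal]
    _ = (1/s + γ ^ γ * (Real.exp 1 + 1) / q) * B := by
        rw [← mul_assoc, inv_mul_cancel₀ hm.ne', one_mul]
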